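/- If β ≥ (p-1)·max{μ₁, μ₂}, then μ₁(k₀+l₀)^{p-1} < 1 and μ₂(k₀+l₀)^{p-1} < 1; moreover every solution (k, l) of the system satisfies both k ≥ k₀ and l ≥ l₀. -/

import Mathlib

open Real

/-- Strict weighted AM-GM / Bernoulli: for `0 < m < 1`, `t > 0`, `t ≠ 1`,
`t ^ m < 1 - m + m * t`. -/
lemma amgm_strict {m t : ℝ} (hm0 : 0 < m) (hm1 : m < 1) (ht : 0 < t) (ht1 : t ≠ 1) :
    t ^ m < 1 - m + m * t := by
  have hlog : Real.log t ≠ 0 := by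
    intro h
    rcases Real.log_eq_zero.1 h with h' | h' | h' <;> simp_all <;> linarith
  have hc := strictConvexOn_exp.2 (Set.mem_univ (Real.log t)) (Set.mem_univ (0 : ℝ))
    hlog hm0 (by linarith : (0:ℝ) < 1 - m) (by ring)
  simp only [smul_eq_mul, mul_zero, add_zero, Real.exp_zero, mul_one] at hc
  rw [Real.exp_log ht] at hc
  have hrp : t ^ m = Real.exp (m * Real.log t) := by
    rw [Real.rpow_def_of_pos ht, mul_comm]
  rw [hrp]
  linarith

/-- Key inequality: for `0 < q < 1` and `t > 0`, `(1+t)^q < 1 + q * t^((q+1)/2)`. -/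
lemma key_ineq {q t : ℝ} (hq0 : 0 < q) (hq1 : q < 1) (ht : 0 < t) :
    (1 + t) ^ q < 1 + q * t ^ ((q + 1) / 2) := by
  have h2q : (2 : ℝ) ^ q < 1 + q := by
    have := amgm_strict hq0 hq1 (by norm_num : (0:ℝ) < 2) (by norm_num)
    linarith
  have he0 : 0 < (q + 1) / 2 := by linarith
  have hmono : StrictMonoOn (fun x : ℝ => 1 + q * x ^ ((q + 1) / 2) - (1 + x) ^ q)
      (Set.Ici 0) := by
    apply strictMonoOn_of_deriv_pos (convex_Ici 0)
    · apply ContinuousOn.sub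
      · apply ContinuousOn.add continuousOn_const
        apply ContinuousOn.mul continuousOn_const
        intro x _
        exact (Real.continuousAt_rpow_const x _ (Or.inr he0.le)).continuousWithinAt
      · intro x hx
        have hx0 : (0:ℝ) ≤ x := hx
        have h1x : (0:ℝ) < 1 + x := by linarith
        exact (ContinuousAt.rpow_const (continuousAt_const.add continuousAt_id)
          (Or.inl h1x.ne')).continuousWithinAt
    · rw [interior_Ici]
      intro x hx
      have hx0 : (0:ℝ) < x := hx
      have h1x : (0:ℝ) < 1 + x := by linarith
      have d1 : HasDerivAt (fun x : ℝ => x ^ ((q + 1) / 2))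
          (((q + 1) / 2) * x ^ ((q + 1) / 2 - 1)) x :=
        Real.hasDerivAt_rpow_const (Or.inl hx0.ne')
      have d2 : HasDerivAt (fun x : ℝ => (1 + x) ^ q) (q * (1 + x) ^ (q - 1)) x := by
        have := (Real.hasDerivAt_rpow_const (x := 1 + x) (p := q)
          (Or.inl h1x.ne')).comp x ((hasDerivAt_id x).const_add 1)
        simpa [Function.comp_def] using this
      have dF : HasDerivAt (fun x : ℝ => 1 + q * x ^ ((q + 1) / 2) - (1 + x) ^ q)
          (q * (((q + 1) / 2) * x ^ ((q + 1) / 2 - 1)) - q * (1 + x) ^ (q - 1)) x :=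
        ((d1.const_mul q).const_add 1).sub d2
      rw [dF.deriv]
      have hsq : 0 < Real.sqrt x := Real.sqrt_pos.2 hx0
      have h2s : 2 * Real.sqrt x ≤ 1 + x := by
        nlinarith [Real.sq_sqrt hx0.le, sq_nonneg (Real.sqrt x - 1)]
      have hA : (1 + x) ^ (q - 1) ≤ (2 * Real.sqrt x) ^ (q - 1) :=
        Real.rpow_le_rpow_of_nonpos (by positivity) h2s (by linarith)
      have hB : (2 * Real.sqrt x) ^ (q - 1) = 2 ^ (q - 1) * x ^ ((q + 1) / 2 - 1) := by
        rw [Real.mul_rpow (by norm_num) (Real.sqrt_nonneg x)]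
        congr 1
        rw [Real.sqrt_eq_rpow, ← Real.rpow_mul hx0.le]
        congr 1
        ring
      have hC : (2 : ℝ) ^ (q - 1) < (q + 1) / 2 := by
        have h2 : (2 : ℝ) ^ (q - 1) = 2 ^ q / 2 := by
          rw [Real.rpow_sub (by norm_num : (0:ℝ) < 2), Real.rpow_one]
        rw [h2]; linarith
      have hxe : 0 < x ^ ((q + 1) / 2 - 1) := Real.rpow_pos_of_pos hx0 _
      have hmain : (1 + x) ^ (q - 1) < ((q + 1) / 2) * x ^ ((q + 1) / 2 - 1) := by
        calc (1 + x) ^ (q - 1) ≤ 2 ^ (q - 1) * x ^ ((q + 1) / 2 - 1) := by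
              rw [← hB]; exact hA
        _ < ((q + 1) / 2) * x ^ ((q + 1) / 2 - 1) := mul_lt_mul_of_pos_right hC hxe
      nlinarith [hmain, hq0]
  have h0 : (fun x : ℝ => 1 + q * x ^ ((q + 1) / 2) - (1 + x) ^ q) 0 = 0 := by
    norm_num [Real.zero_rpow he0.ne', Real.one_rpow]
  have hlt := hmono Set.self_mem_Ici (Set.mem_Ici.2 ht.le) ht
  rw [h0] at hlt
  simp only at hlt
  linarith

/-- The reduced one-variable function is strictly decreasing on `(0, ∞)`. -/
lemma phi_anti {p μ₂ β : ℝ} (hp1 : 1 < p) (hp2 : p < 2) (hμ₂ : 0 < μ₂) (hβ : 0 < β)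
    (hβ2 : (p - 1) * μ₂ ≤ β) (μ₁ : ℝ) :
    StrictAntiOn (fun t : ℝ => μ₂ * t ^ (p - 1) + β * t ^ (p / 2 - 1) - μ₁ - β * t ^ (p / 2))
      (Set.Ioi 0) := by
  set Φ : ℝ → ℝ := fun t => μ₂ * t ^ (p - 1) + β * t ^ (p / 2 - 1) - μ₁ - β * t ^ (p / 2)
    with hΦ
  have hcont : ContinuousOn Φ (Set.Ioi 0) := by
    intro x hx
    have hx0 : (0:ℝ) < x := hx
    apply ContinuousWithinAt.sub
    apply ContinuousWithinAt.sub
    apply ContinuousWithinAt.add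
    · exact ((Real.continuousAt_rpow_const x _ (Or.inl hx0.ne')).const_smul μ₂).continuousWithinAt
    · exact ((Real.continuousAt_rpow_const x _ (Or.inl hx0.ne')).const_smul β).continuousWithinAt
    · exact continuousWithinAt_const
    · exact ((Real.continuousAt_rpow_const x _ (Or.inl hx0.ne')).const_smul β).continuousWithinAt
  have hderiv : ∀ x : ℝ, 0 < x → x ≠ 1 → deriv Φ x < 0 := by
    intro x hx hx1
    have d1 : HasDerivAt (fun t : ℝ => t ^ (p - 1)) ((p - 1) * x ^ (p - 1 - 1)) x :=
      Real.hasDerivAt_rpow_const (Or.inl hx.ne')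
    have d2 : HasDerivAt (fun t : ℝ => t ^ (p / 2 - 1)) ((p / 2 - 1) * x ^ (p / 2 - 1 - 1)) x :=
      Real.hasDerivAt_rpow_const (Or.inl hx.ne')
    have d3 : HasDerivAt (fun t : ℝ => t ^ (p / 2)) ((p / 2) * x ^ (p / 2 - 1)) x :=
      Real.hasDerivAt_rpow_const (Or.inl hx.ne')
    have dΦ : HasDerivAt Φ
        (μ₂ * ((p - 1) * x ^ (p - 1 - 1)) + β * ((p / 2 - 1) * x ^ (p / 2 - 1 - 1))
          - β * ((p / 2) * x ^ (p / 2 - 1))) x := by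
      have := (((d1.const_mul μ₂).add (d2.const_mul β)).sub_const μ₁).sub (d3.const_mul β)
      exact this
    rw [dΦ.deriv]
    have e1 : x ^ (p - 1 - 1) = x ^ (p / 2 - 2) * x ^ (p / 2) := by
      rw [← Real.rpow_add hx]; congr 1; ring
    have e2 : x ^ (p / 2 - 1 - 1) = x ^ (p / 2 - 2) := by
      congr 1; ring
    have e3 : x ^ (p / 2 - 1) = x ^ (p / 2 - 2) * x := by
      rw [show p / 2 - 1 = (p / 2 - 2) + 1 by ring, Real.rpow_add hx, Real.rpow_one]
    have hxp : 0 < x ^ (p / 2 - 2) := Real.rpow_pos_of_pos hx _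
    have hxp2 : 0 < x ^ (p / 2) := Real.rpow_pos_of_pos hx _
    have hb : x ^ (p / 2) < 1 - p / 2 + (p / 2) * x :=
      amgm_strict (by linarith) (by linarith) hx hx1
    have hbr : (p - 1) * μ₂ * x ^ (p / 2) + β * (p / 2 - 1) - β * (p / 2) * x < 0 := by
      nlinarith [mul_le_mul_of_nonneg_right hβ2 hxp2.le, mul_lt_mul_of_pos_left hb hβ]
    have hfin := mul_neg_of_pos_of_neg hxp hbr
    rw [e1, e2, e3]
    nlinarith [hfin]
  have anti1 : StrictAntiOn Φ (Set.Ioc 0 1) := by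
    apply strictAntiOn_of_deriv_neg (convex_Ioc 0 1) (hcont.mono Set.Ioc_subset_Ioi_self)
    rw [interior_Ioc]
    intro x hx
    exact hderiv x hx.1 (ne_of_lt hx.2)
  have anti2 : StrictAntiOn Φ (Set.Ici 1) := by
    apply strictAntiOn_of_deriv_neg (convex_Ici 1)
    · exact hcont.mono (fun x hx => (lt_of_lt_of_le one_pos hx : (0:ℝ) < x))
    · rw [interior_Ici]
      intro x hx
      exact hderiv x (lt_trans one_pos hx) (ne_of_gt hx)
  intro a ha b hb hab
  rcases le_total b 1 with hb1 | hb1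
  · exact anti1 ⟨ha, le_of_lt (lt_of_lt_of_le hab hb1)⟩ ⟨hb, hb1⟩ hab
  · rcases le_total a 1 with ha1 | ha1
    · rcases eq_or_lt_of_le ha1 with h | h
      · subst h
        exact anti2 Set.self_mem_Ici (Set.mem_Ici.2 hb1) hab
      · have h1 : Φ 1 < Φ a := anti1 ⟨ha, ha1⟩ ⟨one_pos, le_refl 1⟩ h
        have h2 : Φ b ≤ Φ 1 := by
          rcases eq_or_lt_of_le hb1 with h' | h'
          · rw [← h']
          · exact le_of_lt (anti2 Set.self_mem_Ici (le_of_lt h') h')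
        linarith
    · exact anti2 (Set.mem_Ici.2 ha1) (Set.mem_Ici.2 hb1) hab

set_option maxHeartbeats 1000000 in
theorem stmt_4 (N : ℕ) (hN : 5 ≤ N) (p : ℝ) (hp : p = (N : ℝ) / ((N : ℝ) - 2))
    (μ₁ μ₂ β : ℝ) (hμ₁ : 0 < μ₁) (hμ₂ : 0 < μ₂) (hβ : 0 < β)
    (hβ' : (p - 1) * max μ₁ μ₂ ≤ β)
    (k₀ l₀ : ℝ) (hk₀ : 0 < k₀) (hl₀ : 0 < l₀)
    (he₁ : μ₁ * k₀ ^ (p - 1) + β * k₀ ^ (p / 2 - 1) * l₀ ^ (p / 2) = 1)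
    (he₂ : μ₂ * l₀ ^ (p - 1) + β * l₀ ^ (p / 2 - 1) * k₀ ^ (p / 2) = 1)
    (hmin : ∀ k l : ℝ, 0 < k → 0 < l →
      μ₁ * k ^ (p - 1) + β * k ^ (p / 2 - 1) * l ^ (p / 2) = 1 →
      μ₂ * l ^ (p - 1) + β * l ^ (p / 2 - 1) * k ^ (p / 2) = 1 →
      k₀ ≤ k) :
    μ₁ * (k₀ + l₀) ^ (p - 1) < 1 ∧ μ₂ * (k₀ + l₀) ^ (p - 1) < 1 ∧
    ∀ k l : ℝ, 0 < k → 0 < l →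
      μ₁ * k ^ (p - 1) + β * k ^ (p / 2 - 1) * l ^ (p / 2) = 1 →
      μ₂ * l ^ (p - 1) + β * l ^ (p / 2 - 1) * k ^ (p / 2) = 1 →
      k₀ ≤ k ∧ l₀ ≤ l := by
  have hN5 : (5 : ℝ) ≤ (N : ℝ) := by exact_mod_cast hN
  have hp1 : 1 < p := by
    rw [hp, lt_div_iff₀ (by linarith)]; linarith
  have hp2 : p < 2 := by
    rw [hp, div_lt_iff₀ (by linarith)]; linarith
  have hβ1 : (p - 1) * μ₁ ≤ β :=
    le_trans (mul_le_mul_of_nonneg_left (le_max_left μ₁ μ₂) (by linarith)) hβ'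
  have hβ2 : (p - 1) * μ₂ ≤ β :=
    le_trans (mul_le_mul_of_nonneg_left (le_max_right μ₁ μ₂) (by linarith)) hβ'
  -- rewriting lemma
  have rew : ∀ μ k l : ℝ, 0 < k → 0 < l →
      μ * k ^ (p - 1) + β * k ^ (p / 2 - 1) * l ^ (p / 2)
        = k ^ (p - 1) * (μ + β * (l / k) ^ (p / 2)) := by
    intro μ k l hk hl
    rw [Real.div_rpow hl.le hk.le]
    have h1 : k ^ (p / 2 - 1) = k ^ (p - 1) / k ^ (p / 2) := by
      rw [← Real.rpow_sub hk]; congr 1; ring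
    have h2 : k ^ (p / 2) ≠ 0 := (Real.rpow_pos_of_pos hk _).ne'
    rw [h1]
    field_simp
  -- solutions give a zero of Φ at t = l/k
  have phi0 : ∀ k l : ℝ, 0 < k → 0 < l →
      μ₁ * k ^ (p - 1) + β * k ^ (p / 2 - 1) * l ^ (p / 2) = 1 →
      μ₂ * l ^ (p - 1) + β * l ^ (p / 2 - 1) * k ^ (p / 2) = 1 →
      μ₂ * (l / k) ^ (p - 1) + β * (l / k) ^ (p / 2 - 1) - μ₁ - β * (l / k) ^ (p / 2) = 0 := by
    intro k l hk hl e1 e2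
    have hl' : l = (l / k) * k := by field_simp
    generalize hT : l / k = t at *
    subst hl'
    have ht : 0 < t := by nlinarith
    have hk2 : k ^ (p - 1) = k ^ (p / 2 - 1) * k ^ (p / 2) := by
      rw [← Real.rpow_add hk]; congr 1; ring
    have E1 : k ^ (p - 1) * (μ₁ + β * t ^ (p / 2)) = 1 := by
      have h : k ^ (p - 1) * (μ₁ + β * t ^ (p / 2))
          = μ₁ * k ^ (p - 1) + β * k ^ (p / 2 - 1) * (t * k) ^ (p / 2) := by
        rw [Real.mul_rpow ht.le hk.le, hk2]; ring
      exact h.trans e1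
    have E2 : k ^ (p - 1) * (μ₂ * t ^ (p - 1) + β * t ^ (p / 2 - 1)) = 1 := by
      have h : k ^ (p - 1) * (μ₂ * t ^ (p - 1) + β * t ^ (p / 2 - 1))
          = μ₂ * (t * k) ^ (p - 1) + β * (t * k) ^ (p / 2 - 1) * k ^ (p / 2) := by
        rw [Real.mul_rpow ht.le hk.le, Real.mul_rpow ht.le hk.le, hk2]; ring
      exact h.trans e2
    have hkp : (0:ℝ) < k ^ (p - 1) := Real.rpow_pos_of_pos hk _
    have hXY : μ₁ + β * t ^ (p / 2)
        = μ₂ * t ^ (p - 1) + β * t ^ (p / 2 - 1) :=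
      mul_left_cancel₀ hkp.ne' (E1.trans E2.symm)
    linarith
  have hanti := phi_anti hp1 hp2 hμ₂ hβ hβ2 μ₁
  have ht₀ : 0 < l₀ / k₀ := div_pos hl₀ hk₀
  -- uniqueness
  have uniq : ∀ k l : ℝ, 0 < k → 0 < l →
      μ₁ * k ^ (p - 1) + β * k ^ (p / 2 - 1) * l ^ (p / 2) = 1 →
      μ₂ * l ^ (p - 1) + β * l ^ (p / 2 - 1) * k ^ (p / 2) = 1 →
      k = k₀ ∧ l = l₀ := by
    intro k l hk hl e1 e2
    have h1 := phi0 k l hk hl e1 e2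
    have h0 := phi0 k₀ l₀ hk₀ hl₀ he₁ he₂
    have ht : 0 < l / k := div_pos hl hk
    have heq : l / k = l₀ / k₀ := by
      by_contra hne
      rcases lt_or_gt_of_ne hne with h | h
      · have := hanti (Set.mem_Ioi.2 ht) (Set.mem_Ioi.2 ht₀) h
        simp only at this
        rw [h1, h0] at this
        exact lt_irrefl 0 this
      · have := hanti (Set.mem_Ioi.2 ht₀) (Set.mem_Ioi.2 ht) h
        simp only at this
        rw [h1, h0] at this
        exact lt_irrefl 0 this
    have E1 : k ^ (p - 1) * (μ₁ + β * (l / k) ^ (p / 2)) = 1 := by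
      rw [← rew μ₁ k l hk hl]; exact e1
    have E1₀ : k₀ ^ (p - 1) * (μ₁ + β * (l₀ / k₀) ^ (p / 2)) = 1 := by
      rw [← rew μ₁ k₀ l₀ hk₀ hl₀]; exact he₁
    rw [heq] at E1
    have hC : 0 < μ₁ + β * (l₀ / k₀) ^ (p / 2) := by
      have := Real.rpow_pos_of_pos ht₀ (p / 2)
      nlinarith
    have hkk : k ^ (p - 1) = k₀ ^ (p - 1) :=
      mul_right_cancel₀ hC.ne' (E1.trans E1₀.symm)
    have hk_eq : k = k₀ := by
      by_contra hne
      rcases lt_or_gt_of_ne hne with h | h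
      · exact absurd hkk (ne_of_lt (Real.rpow_lt_rpow hk.le h (by linarith)))
      · exact absurd hkk.symm (ne_of_lt (Real.rpow_lt_rpow hk₀.le h (by linarith)))
    refine ⟨hk_eq, ?_⟩
    rw [hk_eq] at heq
    have := (div_eq_div_iff hk₀.ne' hk₀.ne').1 heq
    exact mul_right_cancel₀ hk₀.ne' this
  -- the two strict inequalities
  have hq0 : 0 < p - 1 := by linarith
  have hq1 : p - 1 < 1 := by linarith
  have E1₀ : k₀ ^ (p - 1) * (μ₁ + β * (l₀ / k₀) ^ (p / 2)) = 1 := by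
    rw [← rew μ₁ k₀ l₀ hk₀ hl₀]; exact he₁
  have E2₀ : l₀ ^ (p - 1) * (μ₂ + β * (k₀ / l₀) ^ (p / 2)) = 1 := by
    rw [← rew μ₂ l₀ k₀ hl₀ hk₀]; exact he₂
  have hs₀ : 0 < k₀ / l₀ := div_pos hk₀ hl₀
  have claim1 : μ₁ * (k₀ + l₀) ^ (p - 1) < 1 := by
    have hkey := key_ineq hq0 hq1 ht₀
    rw [show (p - 1 + 1) / 2 = p / 2 by ring] at hkey
    have hsum : k₀ + l₀ = k₀ * (1 + l₀ / k₀) := by field_simp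
    have hpow : (k₀ + l₀) ^ (p - 1) = k₀ ^ (p - 1) * (1 + l₀ / k₀) ^ (p - 1) := by
      rw [hsum, Real.mul_rpow hk₀.le (by positivity)]
    rw [hpow]
    have ha : 0 < k₀ ^ (p - 1) := Real.rpow_pos_of_pos hk₀ _
    have hc : 0 < (l₀ / k₀) ^ (p / 2) := Real.rpow_pos_of_pos ht₀ _
    nlinarith [mul_lt_mul_of_pos_left hkey (mul_pos hμ₁ ha),
      mul_le_mul_of_nonneg_right hβ1 (mul_pos ha hc).le, E1₀]
  have claim2 : μ₂ * (k₀ + l₀) ^ (p - 1) < 1 := by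
    have hkey := key_ineq hq0 hq1 hs₀
    rw [show (p - 1 + 1) / 2 = p / 2 by ring] at hkey
    have hsum : k₀ + l₀ = l₀ * (1 + k₀ / l₀) := by field_simp; ring
    have hpow : (k₀ + l₀) ^ (p - 1) = l₀ ^ (p - 1) * (1 + k₀ / l₀) ^ (p - 1) := by
      rw [hsum, Real.mul_rpow hl₀.le (by positivity)]
    rw [hpow]
    have ha : 0 < l₀ ^ (p - 1) := Real.rpow_pos_of_pos hl₀ _
    have hc : 0 < (k₀ / l₀) ^ (p / 2) := Real.rpow_pos_of_pos hs₀ _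
    nlinarith [mul_lt_mul_of_pos_left hkey (mul_pos hμ₂ ha),
      mul_le_mul_of_nonneg_right hβ2 (mul_pos ha hc).le, E2₀]
  refine ⟨claim1, claim2, fun k l hk hl e1 e2 => ⟨hmin k l hk hl e1 e2, ?_⟩⟩
  exact le_of_eq ((uniq k l hk hl e1 e2).2).symm
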